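/- Let V, V' ⊆ {1,…,N} be nonempty with V ∩ V' = ∅, let a ∈ 𝔸_V, a' ∈ 𝔸_{V'}, and let c ∈ ℝ^N have strictly positive entries. Then N^eff(a+a',c) ≥ min{ N^eff(a,c), N^eff(a',c) }. -/
import Mathlib


open Finset

/-- Membership in `𝔸_V`: nonnegative `N × N` matrices supported on `V × V` whose
rows and columns indexed by `V` sum to one. -/
def memA {N : ℕ} (V : Finset (Fin N)) (a : Matrix (Fin N) (Fin N) ℝ) : Prop :=
  (∀ i j, 0 ≤ a i j) ∧
  (∀ i j, (i ∉ V ∨ j ∉ V) → a i j = 0) ∧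
  (∀ i ∈ V, ∑ j, a i j = 1) ∧
  (∀ j ∈ V, ∑ i, a i j = 1)

/-- The effective sample size `N^eff(a, c)`. -/
noncomputable def Neff {N : ℕ} (a : Matrix (Fin N) (Fin N) ℝ) (c : Fin N → ℝ) : ℝ :=
  (∑ i, ∑ j, a i j * c j) ^ 2 / (∑ i, (∑ j, a i j * c j) ^ 2)

lemma rowpos {N : ℕ} {V : Finset (Fin N)} {a : Matrix (Fin N) (Fin N) ℝ}
    (ha : memA V a) {c : Fin N → ℝ} (hc : ∀ j, 0 < c j) {i : Fin N} (hi : i ∈ V) :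
    0 < ∑ j, a i j * c j := by
  obtain ⟨hpos, hsupp, hrow, hcol⟩ := ha
  have hex : ∃ j, 0 < a i j := by
    by_contra h
    push_neg at h
    have : ∀ j, a i j = 0 := fun j => le_antisymm (h j) (hpos i j)
    have h0 : (0:ℝ) = 1 := by
      rw [← hrow i hi, Finset.sum_eq_zero fun j _ => this j]
    norm_num at h0
  obtain ⟨j, hj⟩ := hex
  have h1 : a i j * c j ≤ ∑ k, a i k * c k :=
    Finset.single_le_sum (fun k _ => mul_nonneg (hpos i k) (hc k).le) (Finset.mem_univ j)
  exact lt_of_lt_of_le (mul_pos hj (hc j)) h1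

theorem stmt_6 {N : ℕ} (hN : 1 ≤ N) (V V' : Finset (Fin N))
    (hV : V.Nonempty) (hV' : V'.Nonempty) (hdisj : Disjoint V V')
    (a a' : Matrix (Fin N) (Fin N) ℝ) (ha : memA V a) (ha' : memA V' a')
    (c : Fin N → ℝ) (hc : ∀ j, 0 < c j) :
    min (Neff a c) (Neff a' c) ≤ Neff (a + a') c := by
  obtain ⟨hpos, hsupp, hrow, hcol⟩ := ha
  obtain ⟨hpos', hsupp', hrow', hcol'⟩ := ha'
  set f : Fin N → ℝ := fun i => ∑ j, a i j * c j with hf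
  set g : Fin N → ℝ := fun i => ∑ j, a' i j * c j with hg
  have hf0 : ∀ i, 0 ≤ f i := fun i =>
    Finset.sum_nonneg fun j _ => mul_nonneg (hpos i j) (hc j).le
  have hg0 : ∀ i, 0 ≤ g i := fun i =>
    Finset.sum_nonneg fun j _ => mul_nonneg (hpos' i j) (hc j).le
  have hfg : ∀ i, f i * g i = 0 := by
    intro i
    by_cases hi : i ∈ V
    · have : g i = 0 := Finset.sum_eq_zero fun j _ => by
        rw [hsupp' i j (Or.inl (fun h => Finset.disjoint_left.mp hdisj hi h))]; ring
      simp [this]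
    · have : f i = 0 := Finset.sum_eq_zero fun j _ => by
        rw [hsupp i j (Or.inl hi)]; ring
      simp [this]
  obtain ⟨i₀, hi₀⟩ := hV
  obtain ⟨i₁, hi₁⟩ := hV'
  have hfi₀ : 0 < f i₀ := rowpos ⟨hpos, hsupp, hrow, hcol⟩ hc hi₀
  have hgi₁ : 0 < g i₁ := rowpos ⟨hpos', hsupp', hrow', hcol'⟩ hc hi₁
  set S : ℝ := ∑ i, f i with hS
  set S' : ℝ := ∑ i, g i with hS'
  set Q : ℝ := ∑ i, f i ^ 2 with hQ
  set Q' : ℝ := ∑ i, g i ^ 2 with hQ'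
  have hSpos : 0 < S := Finset.sum_pos' (fun i _ => hf0 i) ⟨i₀, Finset.mem_univ i₀, hfi₀⟩
  have hS'pos : 0 < S' := Finset.sum_pos' (fun i _ => hg0 i) ⟨i₁, Finset.mem_univ i₁, hgi₁⟩
  have hQpos : 0 < Q := Finset.sum_pos' (fun i _ => sq_nonneg _)
    ⟨i₀, Finset.mem_univ i₀, pow_pos hfi₀ 2⟩
  have hQ'pos : 0 < Q' := Finset.sum_pos' (fun i _ => sq_nonneg _)
    ⟨i₁, Finset.mem_univ i₁, pow_pos hgi₁ 2⟩
  have hNa : Neff a c = S ^ 2 / Q := rfl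
  have hNa' : Neff a' c = S' ^ 2 / Q' := rfl
  have hrowsum : ∀ i, (∑ j, (a + a') i j * c j) = f i + g i := by
    intro i
    simp only [Matrix.add_apply, add_mul, Finset.sum_add_distrib, hf, hg]
  have hNsum : Neff (a + a') c = (S + S') ^ 2 / (Q + Q') := by
    unfold Neff
    simp only [hrowsum]
    congr 1
    · rw [Finset.sum_add_distrib]
    · rw [← Finset.sum_add_distrib]
      apply Finset.sum_congr rfl
      intro i _
      have := hfg i
      ring_nf
      nlinarith [hfg i]
  rw [hNa, hNa', hNsum]
  set m : ℝ := min (S ^ 2 / Q) (S' ^ 2 / Q') with hm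
  have hm1 : m * Q ≤ S ^ 2 := by
    have : m ≤ S ^ 2 / Q := min_le_left _ _
    calc m * Q ≤ (S ^ 2 / Q) * Q := by nlinarith
    _ = S ^ 2 := by field_simp
  have hm2 : m * Q' ≤ S' ^ 2 := by
    have : m ≤ S' ^ 2 / Q' := min_le_right _ _
    calc m * Q' ≤ (S' ^ 2 / Q') * Q' := by nlinarith
    _ = S' ^ 2 := by field_simp
  rw [le_div_iff₀ (by linarith)]
  nlinarith [mul_pos hSpos hS'pos]
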